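/- For all x, x′, z, z′ ∈ ℝ^d and every α > 0, if ‖x − z‖ < α and ‖x′ − z′‖ < α, then |exp(−‖x − x′‖²/2) − exp(−‖z − z′‖²/2)| < 1 − exp(−2α(‖z − z′‖ + α)). -/
import Mathlib

lemma exp_abs_sub (u v : ℝ) (hu : 0 ≤ u) (hv : 0 ≤ v) :
    |Real.exp (-u) - Real.exp (-v)| ≤ 1 - Real.exp (-|u - v|) := by
  rcases le_total v u with h | h
  · have h1 : Real.exp (-u) ≤ Real.exp (-v) := Real.exp_le_exp.2 (by linarith)
    rw [abs_of_nonpos (by linarith), abs_of_nonneg (by linarith)]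
    have h2 : Real.exp (-u) = Real.exp (-v) * Real.exp (-(u - v)) := by
      rw [← Real.exp_add]; ring_nf
    have h3 : Real.exp (-v) ≤ 1 := Real.exp_le_one_iff.2 (by linarith)
    have h4 : Real.exp (-(u - v)) ≤ 1 := Real.exp_le_one_iff.2 (by linarith)
    have h5 : 0 < Real.exp (-(u - v)) := Real.exp_pos _
    nlinarith
  · have h1 : Real.exp (-v) ≤ Real.exp (-u) := Real.exp_le_exp.2 (by linarith)
    rw [abs_of_nonneg (by linarith), abs_of_nonpos (by linarith)]
    have h2 : Real.exp (-v) = Real.exp (-u) * Real.exp (-(v - u)) := by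
      rw [← Real.exp_add]; ring_nf
    have h3 : Real.exp (-u) ≤ 1 := Real.exp_le_one_iff.2 (by linarith)
    have h4 : Real.exp (-(v - u)) ≤ 1 := Real.exp_le_one_iff.2 (by linarith)
    have h5 : 0 < Real.exp (-(v - u)) := Real.exp_pos _
    rw [neg_neg, show u - v = -(v - u) by ring]
    nlinarith

/-- error bound for the Gaussian covariance function at a pair of inputs. -/
theorem stmt_3 (d : ℕ) (x x' z z' : EuclideanSpace ℝ (Fin d)) (α : ℝ) (hα : 0 < α)
    (h1 : ‖x - z‖ < α) (h2 : ‖x' - z'‖ < α) :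
    |Real.exp (-‖x - x'‖ ^ 2 / 2) - Real.exp (-‖z - z'‖ ^ 2 / 2)| <
      1 - Real.exp (-(2 * α * (‖z - z'‖ + α))) := by
  set a := ‖x - x'‖ with ha
  set b := ‖z - z'‖ with hb
  have ha0 : 0 ≤ a := norm_nonneg _
  have hb0 : 0 ≤ b := norm_nonneg _
  have hab : |a - b| < 2 * α := by
    calc |a - b| ≤ ‖(x - x') - (z - z')‖ := abs_norm_sub_norm_le _ _
      _ = ‖(x - z) - (x' - z')‖ := by congr 1; abel
      _ ≤ ‖x - z‖ + ‖x' - z'‖ := norm_sub_le _ _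
      _ < 2 * α := by linarith
  have ht0 : 0 ≤ |a - b| := abs_nonneg _
  have hle1 : a - b ≤ |a - b| := le_abs_self _
  have hle2 : b - a ≤ |a - b| := by rw [abs_sub_comm]; exact le_abs_self _
  have key : |a ^ 2 / 2 - b ^ 2 / 2| < 2 * α * (b + α) := by
    have e1 : |a ^ 2 / 2 - b ^ 2 / 2| = |a - b| * (a + b) / 2 := by
      rw [show a ^ 2 / 2 - b ^ 2 / 2 = (a - b) * (a + b) / 2 by ring,
        abs_div, abs_mul, abs_of_nonneg (by linarith : (0:ℝ) ≤ a + b)]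
      norm_num
    rw [e1]
    nlinarith [mul_le_mul_of_nonneg_left (show a + b ≤ 2 * b + |a - b| by linarith) ht0,
      mul_le_mul_of_nonneg_right hab.le hb0,
      mul_self_lt_mul_self ht0 hab]
  have step1 : |Real.exp (-(a ^ 2 / 2)) - Real.exp (-(b ^ 2 / 2))| ≤
      1 - Real.exp (-|a ^ 2 / 2 - b ^ 2 / 2|) :=
    exp_abs_sub _ _ (by positivity) (by positivity)
  have step2 : Real.exp (-(2 * α * (b + α))) < Real.exp (-|a ^ 2 / 2 - b ^ 2 / 2|) :=
    Real.exp_lt_exp.2 (by linarith)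
  have e2 : -a ^ 2 / 2 = -(a ^ 2 / 2) := by ring
  have e3 : -b ^ 2 / 2 = -(b ^ 2 / 2) := by ring
  rw [e2, e3]
  linarith
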